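/- For every admissible subgroup L of ℤ × ℤ, the truncated-square torus graph G(L) — the edge graph of the semi-equivelar map of type {4,8,8} on the torus determined by L — is 3-connected. -/

import Mathlib

/-- `e₁ = (1,0)` in `ℤ × ℤ`. -/
def e₁ : ℤ × ℤ := (1, 0)

/-- `e₂ = (0,1)` in `ℤ × ℤ`. -/
def e₂ : ℤ × ℤ := (0, 1)

/-- A subgroup `L ≤ ℤ × ℤ` is admissible if it has finite index and contains no nonzero
vector `(v₁, v₂)` with `|v₁| ≤ 2` and `|v₂| ≤ 2`. -/
def Admissible (L : AddSubgroup (ℤ × ℤ)) : Prop :=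
  Finite ((ℤ × ℤ) ⧸ L) ∧ ∀ v ∈ L, v ≠ 0 → ¬(|v.1| ≤ 2 ∧ |v.2| ≤ 2)

/-- A graph is Hamiltonian if it contains a cycle visiting every vertex (exactly once:
a cycle repeats no vertex other than its basepoint). -/
def SimpleGraph.Hamiltonian {α : Type*} (G : SimpleGraph α) : Prop :=
  ∃ (a : α) (p : G.Walk a a), p.IsCycle ∧ ∀ v, v ∈ p.support

/-- A finite simple graph is `k`-connected if it has more than `k` vertices and for every
set `S` of fewer than `k` vertices, the subgraph induced on the complement of `S` is
connected. -/
def SimpleGraph.KConnected {α : Type*} (k : ℕ) (G : SimpleGraph α) : Prop :=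
  k < Nat.card α ∧ ∀ S : Finset α, S.card < k → (G.induce (↑S : Set α)ᶜ).Connected

/-- The edge relation of the truncated-square graph over an abelian group `A`
(second coordinates are taken mod 4). -/
def truncSquareRel {A : Type*} [AddCommGroup A] (E₁ E₂ : A) :
    A × Fin 4 → A × Fin 4 → Prop := fun u v =>
  (∃ (x : A) (i : Fin 4), u = (x, i) ∧ v = (x, i + 1)) ∨
  (∃ x : A, u = (x, 0) ∧ v = (x + E₁, 2)) ∨
  (∃ x : A, u = (x, 1) ∧ v = (x + E₂, 3))

/-- The truncated-square graph over an abelian group `A`. -/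
def truncSquareGraph {A : Type*} [AddCommGroup A] (E₁ E₂ : A) : SimpleGraph (A × Fin 4) :=
  SimpleGraph.fromRel (truncSquareRel E₁ E₂)

/-- The truncated-square torus graph `G(L)`, the edge graph of the semi-equivelar map of
type `{4,8,8}` on the torus determined by `L`. -/
def truncSquareTorusGraph (L : AddSubgroup (ℤ × ℤ)) :
    SimpleGraph (((ℤ × ℤ) ⧸ L) × Fin 4) :=
  truncSquareGraph (QuotientAddGroup.mk e₁) (QuotientAddGroup.mk e₂)


section CayleyAbstract

variable {A : Type*} [AddCommGroup A]

/-- No small relations between `E₁, E₂`. -/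
def NoSmallRel (E₁ E₂ : A) : Prop :=
  ∀ a b : ℤ, a.natAbs ≤ 2 → b.natAbs ≤ 2 → (a ≠ 0 ∨ b ≠ 0) → a • E₁ + b • E₂ ≠ 0

theorem NoSmallRel.swap {E₁ E₂ : A} (hs : NoSmallRel E₁ E₂) : NoSmallRel E₂ E₁ := by
  intro a b ha hb hab h
  exact hs b a hb ha hab.symm (by rw [← h]; abel)

theorem NoSmallRel.add_ne {E₁ E₂ : A} (hs : NoSmallRel E₁ E₂) (z : A) {a b c d : ℤ}
    (h1 : (a - c).natAbs ≤ 2) (h2 : (b - d).natAbs ≤ 2) (h3 : a ≠ c ∨ b ≠ d) :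
    z + (a • E₁ + b • E₂) ≠ z + (c • E₁ + d • E₂) := by
  intro h
  have h' : a • E₁ + b • E₂ = c • E₁ + d • E₂ := add_left_cancel h
  apply hs (a - c) (b - d) h1 h2 (by omega)
  rw [sub_smul, sub_smul,
    show a • E₁ - c • E₁ + (b • E₂ - d • E₂) = (a • E₁ + b • E₂) - (c • E₁ + d • E₂) from by
      abel, h', sub_self]

theorem notin_of_pair {D : Finset A} (hD : D.card ≤ 2) {p q : A} (hp : p ∈ D) (hq : q ∈ D)
    (hpq : p ≠ q) {r : A} (hrp : r ≠ p) (hrq : r ≠ q) : r ∉ D := by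
  classical
  intro hr
  have hsub : ({p, q, r} : Finset A) ⊆ D := by
    intro z hz
    simp only [Finset.mem_insert, Finset.mem_singleton] at hz
    rcases hz with rfl | rfl | rfl <;> assumption
  have h3 : ({p, q, r} : Finset A).card = 3 := by
    rw [Finset.card_insert_of_notMem (by simp [hpq, hrp.symm]),
      Finset.card_insert_of_notMem (by simp [hrq.symm]), Finset.card_singleton]
  have := Finset.card_le_card hsub
  omega

theorem Int.sign_natAbs_eq_one {a : ℤ} (h : a ≠ 0) : a.sign.natAbs = 1 := by
  rcases Int.lt_or_lt_of_ne h with h' | h'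
  · rw [Int.sign_eq_neg_one_of_neg h']; rfl
  · rw [Int.sign_eq_one_of_pos h']; rfl

theorem Int.natAbs_sub_sign {a : ℤ} (h : a ≠ 0) : (a - a.sign).natAbs + 1 = a.natAbs := by
  rcases Int.lt_or_lt_of_ne h with h' | h'
  · rw [Int.sign_eq_neg_one_of_neg h']; omega
  · rw [Int.sign_eq_one_of_pos h']; omega

theorem Int.eq_sign_of_natAbs_eq_one {a : ℤ} (h : a.natAbs = 1) : a = a.sign := by
  rcases (by omega : a = 1 ∨ a = -1) with rfl | rfl <;> rfl

/-- One step of moving in the Cayley graph of `A` (generators `±E₁, ±E₂`),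
staying outside `D`. -/
def CAStep (E₁ E₂ : A) (D : Finset A) (p q : A) : Prop :=
  p ∉ D ∧ q ∉ D ∧ ∃ s : ℤ, s.natAbs = 1 ∧ (q = p + s • E₁ ∨ q = p + s • E₂)

/-- Reachability in the Cayley graph avoiding `D`. -/
def CA (E₁ E₂ : A) (D : Finset A) : A → A → Prop := Relation.ReflTransGen (CAStep E₁ E₂ D)

theorem CA.swap {E₁ E₂ : A} {D : Finset A} {x y : A} (h : CA E₂ E₁ D x y) :
    CA E₁ E₂ D x y :=
  Relation.ReflTransGen.mono (r := CAStep E₂ E₁ D) (p := CAStep E₁ E₂ D)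
    (fun _ _ ⟨hp, hq, s, hs1, hor⟩ => ⟨hp, hq, s, hs1, hor.symm⟩) x y h

/-- Weight measure for the induction. -/
def wgt (v : ℤ × ℤ) : ℕ :=
  2 * (v.1.natAbs + v.2.natAbs) + (if v.1 = 0 then 1 else 0) + (if v.2 = 0 then 1 else 0)

theorem wgt_swap (v : ℤ × ℤ) : wgt v.swap = wgt v := by
  simp only [wgt, Prod.swap]; omega

theorem cayley_free {E₁ E₂ : A} (hs : NoSmallRel E₁ E₂) {D : Finset A} {n : ℕ}
    (rec : ∀ (v : ℤ × ℤ) (x t : A), wgt v ≤ n → x ∉ D → t ∉ D →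
      t = x + (v.1 • E₁ + v.2 • E₂) → CA E₁ E₂ D x t)
    {v : ℤ × ℤ} {x t : A} (hv1 : v.1 ≠ 0) (hm : wgt v ≤ n + 1) (hx : x ∉ D) (ht : t ∉ D)
    (hteq : t = x + (v.1 • E₁ + v.2 • E₂)) (hfree : x + v.1.sign • E₁ ∉ D) :
    CA E₁ E₂ D x t := by
  have hs1 : v.1.sign.natAbs = 1 := Int.sign_natAbs_eq_one hv1
  have hdec : (v.1 - v.1.sign).natAbs + 1 = v.1.natAbs := Int.natAbs_sub_sign hv1
  have step1 : CAStep E₁ E₂ D x (x + v.1.sign • E₁) :=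
    ⟨hx, hfree, v.1.sign, hs1, Or.inl rfl⟩
  have hrec := rec (v.1 - v.1.sign, v.2) (x + v.1.sign • E₁) t
    (by simp only [wgt] at hm ⊢; split_ifs at hm ⊢ <;> omega)
    hfree ht (by rw [hteq]; module)
  exact Relation.ReflTransGen.head step1 hrec

theorem cayley_blocked1d {E₁ E₂ : A} (hs : NoSmallRel E₁ E₂) {D : Finset A}
    (hD : D.card ≤ 2) {n : ℕ}
    (rec : ∀ (v : ℤ × ℤ) (x t : A), wgt v ≤ n → x ∉ D → t ∉ D →
      t = x + (v.1 • E₁ + v.2 • E₂) → CA E₁ E₂ D x t)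
    {v : ℤ × ℤ} {x t : A} (hv1 : v.1 ≠ 0) (hv2 : v.2 = 0) (hm : wgt v ≤ n + 1)
    (hx : x ∉ D) (ht : t ∉ D)
    (hteq : t = x + (v.1 • E₁ + v.2 • E₂)) (hblk : x + v.1.sign • E₁ ∈ D) :
    CA E₁ E₂ D x t := by
  have hs1 : v.1.sign.natAbs = 1 := Int.sign_natAbs_eq_one hv1
  have hdec : (v.1 - v.1.sign).natAbs + 1 = v.1.natAbs := Int.natAbs_sub_sign hv1
  set s := v.1.sign with hsdef
  have hblk' : x + (s • E₁ + (0:ℤ) • E₂) ∈ D := by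
    rwa [show x + (s • E₁ + (0:ℤ) • E₂) = x + s • E₁ by module]
  have ha2 : 2 ≤ v.1.natAbs := by
    by_contra hlt
    have h1 : v.1 = s := hsdef ▸ Int.eq_sign_of_natAbs_eq_one (by omega)
    have he : t = x + s • E₁ := by rw [hteq, hv2, h1]; module
    exact ht (he ▸ hblk)
  obtain ⟨ε, hε, hP1, hP2⟩ :
      ∃ ε : ℤ, ε.natAbs = 1 ∧ x + ((0:ℤ) • E₁ + ε • E₂) ∉ D ∧ x + (s • E₁ + ε • E₂) ∉ D := by
    by_cases hq1 : x + ((0:ℤ) • E₁ + (1:ℤ) • E₂) ∈ D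
    · exact ⟨-1, by decide,
        notin_of_pair hD hblk' hq1 (hs.add_ne x (by omega) (by omega) (by omega))
          (hs.add_ne x (by omega) (by omega) (by omega))
          (hs.add_ne x (by omega) (by omega) (by omega)),
        notin_of_pair hD hblk' hq1 (hs.add_ne x (by omega) (by omega) (by omega))
          (hs.add_ne x (by omega) (by omega) (by omega))
          (hs.add_ne x (by omega) (by omega) (by omega))⟩
    · by_cases hq2 : x + (s • E₁ + (1:ℤ) • E₂) ∈ D
      · exact ⟨-1, by decide,
          notin_of_pair hD hblk' hq2 (hs.add_ne x (by omega) (by omega) (by omega))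
            (hs.add_ne x (by omega) (by omega) (by omega))
            (hs.add_ne x (by omega) (by omega) (by omega)),
          notin_of_pair hD hblk' hq2 (hs.add_ne x (by omega) (by omega) (by omega))
            (hs.add_ne x (by omega) (by omega) (by omega))
            (hs.add_ne x (by omega) (by omega) (by omega))⟩
      · exact ⟨1, rfl, hq1, hq2⟩
  have st1 : CAStep E₁ E₂ D x (x + ((0:ℤ) • E₁ + ε • E₂)) :=
    ⟨hx, hP1, ε, hε, Or.inr (by module)⟩
  have st2 : CAStep E₁ E₂ D (x + ((0:ℤ) • E₁ + ε • E₂)) (x + (s • E₁ + ε • E₂)) :=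
    ⟨hP1, hP2, s, hs1, Or.inl (by module)⟩
  have hrec := rec (v.1 - s, -ε) (x + (s • E₁ + ε • E₂)) t
    (by simp only [wgt] at hm ⊢; split_ifs at hm ⊢ <;> omega)
    hP2 ht (by rw [hteq, hv2]; module)
  exact Relation.ReflTransGen.head st1 (Relation.ReflTransGen.head st2 hrec)

theorem cayley_blockade {E₁ E₂ : A} (hs : NoSmallRel E₁ E₂) {D : Finset A}
    (hD : D.card ≤ 2) {n : ℕ}
    (rec : ∀ (v : ℤ × ℤ) (x t : A), wgt v ≤ n → x ∉ D → t ∉ D →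
      t = x + (v.1 • E₁ + v.2 • E₂) → CA E₁ E₂ D x t)
    {v : ℤ × ℤ} {x t : A} (hv1 : v.1 ≠ 0) (hv2 : v.2 ≠ 0) (hm : wgt v ≤ n + 1)
    (hx : x ∉ D) (ht : t ∉ D) (hteq : t = x + (v.1 • E₁ + v.2 • E₂))
    (hb1 : x + v.1.sign • E₁ ∈ D) (hb2 : x + v.2.sign • E₂ ∈ D) :
    CA E₁ E₂ D x t := by
  have hs1 : v.1.sign.natAbs = 1 := Int.sign_natAbs_eq_one hv1
  have hs2 : v.2.sign.natAbs = 1 := Int.sign_natAbs_eq_one hv2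
  have hdec1 : (v.1 - v.1.sign).natAbs + 1 = v.1.natAbs := Int.natAbs_sub_sign hv1
  have hdec2 : (v.2 - v.2.sign).natAbs + 1 = v.2.natAbs := Int.natAbs_sub_sign hv2
  set s1 := v.1.sign
  set s2 := v.2.sign
  have hb1' : x + (s1 • E₁ + (0:ℤ) • E₂) ∈ D := by
    rwa [show x + (s1 • E₁ + (0:ℤ) • E₂) = x + s1 • E₁ by module]
  have hb2' : x + ((0:ℤ) • E₁ + s2 • E₂) ∈ D := by
    rwa [show x + ((0:ℤ) • E₁ + s2 • E₂) = x + s2 • E₂ by module]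
  have hdne : x + (s1 • E₁ + (0:ℤ) • E₂) ≠ x + ((0:ℤ) • E₁ + s2 • E₂) :=
    hs.add_ne x (by omega) (by omega) (by omega)
  have nq : ∀ a b : ℤ, (a - s1).natAbs ≤ 2 → (b - 0).natAbs ≤ 2 → (a ≠ s1 ∨ b ≠ 0) →
      (a - 0).natAbs ≤ 2 → (b - s2).natAbs ≤ 2 → (a ≠ 0 ∨ b ≠ s2) →
      x + (a • E₁ + b • E₂) ∉ D := fun a b h1 h2 h3 h4 h5 h6 =>
    notin_of_pair hD hb1' hb2' hdne (hs.add_ne x h1 h2 h3) (hs.add_ne x h4 h5 h6)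
  have nq1 := nq 0 (-s2) (by omega) (by omega) (by omega) (by omega) (by omega) (by omega)
  have nq2 := nq s1 (-s2) (by omega) (by omega) (by omega) (by omega) (by omega) (by omega)
  have nq3 := nq (2*s1) (-s2) (by omega) (by omega) (by omega) (by omega) (by omega) (by omega)
  have nq4 := nq (2*s1) 0 (by omega) (by omega) (by omega) (by omega) (by omega) (by omega)
  have nq5 := nq (2*s1) s2 (by omega) (by omega) (by omega) (by omega) (by omega) (by omega)
  have nq6 := nq s1 s2 (by omega) (by omega) (by omega) (by omega) (by omega) (by omega)
  have st1 : CAStep E₁ E₂ D x (x + ((0:ℤ) • E₁ + (-s2) • E₂)) :=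
    ⟨hx, nq1, -s2, by omega, Or.inr (by module)⟩
  have st2 : CAStep E₁ E₂ D (x + ((0:ℤ) • E₁ + (-s2) • E₂)) (x + (s1 • E₁ + (-s2) • E₂)) :=
    ⟨nq1, nq2, s1, hs1, Or.inl (by module)⟩
  have st3 : CAStep E₁ E₂ D (x + (s1 • E₁ + (-s2) • E₂)) (x + ((2*s1) • E₁ + (-s2) • E₂)) :=
    ⟨nq2, nq3, s1, hs1, Or.inl (by module)⟩
  have st4 : CAStep E₁ E₂ D (x + ((2*s1) • E₁ + (-s2) • E₂)) (x + ((2*s1) • E₁ + (0:ℤ) • E₂)) :=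
    ⟨nq3, nq4, s2, hs2, Or.inr (by module)⟩
  have st5 : CAStep E₁ E₂ D (x + ((2*s1) • E₁ + (0:ℤ) • E₂)) (x + ((2*s1) • E₁ + s2 • E₂)) :=
    ⟨nq4, nq5, s2, hs2, Or.inr (by module)⟩
  have st6 : CAStep E₁ E₂ D (x + ((2*s1) • E₁ + s2 • E₂)) (x + (s1 • E₁ + s2 • E₂)) :=
    ⟨nq5, nq6, -s1, by omega, Or.inl (by module)⟩
  have hrec := rec (v.1 - s1, v.2 - s2) (x + (s1 • E₁ + s2 • E₂)) t
    (by simp only [wgt] at hm ⊢; split_ifs at hm ⊢ <;> omega)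
    nq6 ht (by rw [hteq]; module)
  exact .head st1 (.head st2 (.head st3 (.head st4 (.head st5 (.head st6 hrec)))))

theorem cayley_reach {E₁ E₂ : A} (hs : NoSmallRel E₁ E₂) {D : Finset A} (hD : D.card ≤ 2) :
    ∀ (n : ℕ) (v : ℤ × ℤ) (x t : A), wgt v ≤ n → x ∉ D → t ∉ D →
      t = x + (v.1 • E₁ + v.2 • E₂) → CA E₁ E₂ D x t := by
  intro n
  induction n with
  | zero =>
    intro v x t hm hx ht hteq
    exfalso; simp only [wgt] at hm; split_ifs at hm <;> omega
  | succ n ih =>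
    intro v x t hm hx ht hteq
    have rec' : ∀ (w : ℤ × ℤ) (x t : A), wgt w ≤ n → x ∉ D → t ∉ D →
        t = x + (w.1 • E₂ + w.2 • E₁) → CA E₂ E₁ D x t := by
      intro w x t hm hx ht hteq
      exact (ih w.swap x t (by rwa [wgt_swap]) hx ht
        (by rw [hteq]; simp only [Prod.fst_swap, Prod.snd_swap]; abel)).swap
    have hmsw : wgt v.swap ≤ n + 1 := by rwa [wgt_swap]
    have hteqsw : t = x + (v.swap.1 • E₂ + v.swap.2 • E₁) := by
      rw [hteq]; simp only [Prod.fst_swap, Prod.snd_swap]; abel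
    by_cases hv1 : v.1 = 0
    · by_cases hv2 : v.2 = 0
      · have : t = x := by rw [hteq, hv1, hv2]; simp
        exact this ▸ Relation.ReflTransGen.refl
      · by_cases hfree : x + v.2.sign • E₂ ∈ D
        · exact (cayley_blocked1d hs.swap hD rec' (v := v.swap)
            (by simpa using hv2) (by simpa using hv1) hmsw hx ht hteqsw
            (by simpa using hfree)).swap
        · exact (cayley_free hs.swap rec' (v := v.swap)
            (by simpa using hv2) hmsw hx ht hteqsw (by simpa using hfree)).swap
    · by_cases hfree1 : x + v.1.sign • E₁ ∈ D
      · by_cases hv2 : v.2 = 0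
        · exact cayley_blocked1d hs hD ih hv1 hv2 hm hx ht hteq hfree1
        · by_cases hfree2 : x + v.2.sign • E₂ ∈ D
          · exact cayley_blockade hs hD ih hv1 hv2 hm hx ht hteq hfree1 hfree2
          · exact (cayley_free hs.swap rec' (v := v.swap)
              (by simpa using hv2) hmsw hx ht hteqsw (by simpa using hfree2)).swap
      · exact cayley_free hs ih hv1 hm hx ht hteq hfree1

end CayleyAbstract

section GraphLayer

open SimpleGraph

variable {A : Type*} [AddCommGroup A]

/-- Reachability by a walk avoiding the vertex set `S`. -/
def Avoid {V : Type*} (G : SimpleGraph V) (S : Finset V) (u v : V) : Prop :=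
  ∃ p : G.Walk u v, ∀ w ∈ p.support, w ∉ S

theorem Avoid.refl {V : Type*} (G : SimpleGraph V) {S : Finset V} {u : V} (hu : u ∉ S) :
    Avoid G S u u :=
  ⟨SimpleGraph.Walk.nil, by simpa using hu⟩

theorem Avoid.trans {V : Type*} {G : SimpleGraph V} {S : Finset V} {u v w : V}
    (h1 : Avoid G S u v) (h2 : Avoid G S v w) : Avoid G S u w := by
  obtain ⟨p, hp⟩ := h1; obtain ⟨q, hq⟩ := h2
  refine ⟨p.append q, fun z hz => ?_⟩
  rw [SimpleGraph.Walk.support_append, List.mem_append] at hz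
  exact hz.elim (hp z) (fun h => hq z (List.mem_of_mem_tail h))

theorem Avoid.symm {V : Type*} {G : SimpleGraph V} {S : Finset V} {u v : V}
    (h : Avoid G S u v) : Avoid G S v u := by
  obtain ⟨p, hp⟩ := h
  exact ⟨p.reverse, fun z hz => hp z (by simpa using hz)⟩

theorem Avoid.edge {V : Type*} {G : SimpleGraph V} {S : Finset V} {u v : V}
    (h : G.Adj u v) (hu : u ∉ S) (hv : v ∉ S) : Avoid G S u v := by
  refine ⟨h.toWalk, fun z hz => ?_⟩
  simp only [SimpleGraph.Walk.support_cons, SimpleGraph.Walk.support_nil, List.mem_cons,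
    List.mem_singleton, List.not_mem_nil, or_false] at hz
  rcases hz with rfl | rfl
  · exact hu
  · exact hv

theorem tsg_adj_ring {E₁ E₂ : A} (x : A) (i : Fin 4) :
    (truncSquareGraph E₁ E₂).Adj (x, i) (x, i + 1) := by
  rw [truncSquareGraph, SimpleGraph.fromRel_adj]
  refine ⟨?_, Or.inl (Or.inl ⟨x, i, rfl, rfl⟩)⟩
  have : ∀ j : Fin 4, j ≠ j + 1 := by decide
  simp [Prod.ext_iff, this i]

theorem tsg_adj_e₁ {E₁ E₂ : A} (x : A) :
    (truncSquareGraph E₁ E₂).Adj (x, 0) (x + E₁, 2) := by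
  rw [truncSquareGraph, SimpleGraph.fromRel_adj]
  refine ⟨?_, Or.inl (Or.inr (Or.inl ⟨x, rfl, rfl⟩))⟩
  simp [Prod.ext_iff]

theorem tsg_adj_e₂ {E₁ E₂ : A} (x : A) :
    (truncSquareGraph E₁ E₂).Adj (x, 1) (x + E₂, 3) := by
  rw [truncSquareGraph, SimpleGraph.fromRel_adj]
  refine ⟨?_, Or.inl (Or.inr (Or.inr ⟨x, rfl, rfl⟩))⟩
  simp [Prod.ext_iff]

theorem sq_walk {E₁ E₂ : A} (S : Finset (A × Fin 4)) {x : A}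
    (hx : ∀ j : Fin 4, (x, j) ∉ S) (i k : Fin 4) :
    Avoid (truncSquareGraph E₁ E₂) S (x, i) (x, k) := by
  have h1 : ∀ j : Fin 4, Avoid (truncSquareGraph E₁ E₂) S (x, j) (x, j + 1) :=
    fun j => Avoid.edge (tsg_adj_ring x j) (hx j) (hx _)
  have key : ∀ d j : Fin 4, Avoid (truncSquareGraph E₁ E₂) S (x, j) (x, j + d) := by
    intro d j
    rcases (by revert d; decide : d = 0 ∨ d = 1 ∨ d = 2 ∨ d = 3) with rfl | rfl | rfl | rfl
    · have e : j + (0 : Fin 4) = j := by revert j; decide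
      rw [e]; exact Avoid.refl _ (hx j)
    · exact h1 j
    · have e : j + 1 + 1 = j + 2 := by revert j; decide
      exact e ▸ (h1 j).trans (h1 (j + 1))
    · have e : j + 1 + 1 + 1 = j + 3 := by revert j; decide
      exact e ▸ ((h1 j).trans (h1 (j + 1))).trans (h1 (j + 1 + 1))
  have e : i + (k - i) = k := by revert i k; decide
  have := key (k - i) i
  rwa [e] at this

theorem notS_of_notD [DecidableEq A] {S : Finset (A × Fin 4)} {x : A}
    (hx : x ∉ S.image Prod.fst) (j : Fin 4) : (x, j) ∉ S :=
  fun h => hx (Finset.mem_image_of_mem Prod.fst h)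

theorem cross_e₁ {E₁ E₂ : A} (S : Finset (A × Fin 4)) {x : A}
    (hx : ∀ j : Fin 4, (x, j) ∉ S) (hy : ∀ j : Fin 4, (x + E₁, j) ∉ S) :
    Avoid (truncSquareGraph E₁ E₂) S (x, 0) (x + E₁, 0) :=
  (Avoid.edge (tsg_adj_e₁ x) (hx 0) (hy 2)).trans (sq_walk S hy 2 0)

theorem cross_e₂ {E₁ E₂ : A} (S : Finset (A × Fin 4)) {x : A}
    (hx : ∀ j : Fin 4, (x, j) ∉ S) (hy : ∀ j : Fin 4, (x + E₂, j) ∉ S) :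
    Avoid (truncSquareGraph E₁ E₂) S (x, 0) (x + E₂, 0) :=
  ((Avoid.edge (tsg_adj_ring x 0) (hx 0) (hx 1)).trans
    (Avoid.edge (tsg_adj_e₂ x) (hx 1) (hy 3))).trans (sq_walk S hy 3 0)

theorem CA_to_Avoid [DecidableEq A] {E₁ E₂ : A} {S : Finset (A × Fin 4)} {y z : A}
    (h : CA E₁ E₂ (S.image Prod.fst) y z) (hy : y ∉ S.image Prod.fst) :
    Avoid (truncSquareGraph E₁ E₂) S (y, 0) (z, 0) := by
  induction h with
  | refl => exact Avoid.refl _ (notS_of_notD hy 0)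
  | @tail b c hab hbc ih =>
    obtain ⟨hb, hc, s, hs1, hor⟩ := hbc
    have hbS := notS_of_notD hb
    have hcS := notS_of_notD hc
    refine ih.trans ?_
    rcases hor with hco | hco
    · rcases (by omega : s = 1 ∨ s = -1) with rfl | rfl
      · have hco' : c = b + E₁ := by rw [hco]; module
        rw [hco']
        exact cross_e₁ S hbS (fun j => hco' ▸ hcS j)
      · have hco' : b = c + E₁ := by rw [hco]; module
        rw [show b = c + E₁ from hco'] at hbS ⊢
        exact (cross_e₁ S hcS hbS).symm
    · rcases (by omega : s = 1 ∨ s = -1) with rfl | rfl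
      · have hco' : c = b + E₂ := by rw [hco]; module
        rw [hco']
        exact cross_e₂ S hbS (fun j => hco' ▸ hcS j)
      · have hco' : b = c + E₂ := by rw [hco]; module
        rw [show b = c + E₂ from hco'] at hbS ⊢
        exact (cross_e₂ S hcS hbS).symm

/-- Coefficients of the four exit directions of a square. -/
def dirc : Fin 4 → ℤ × ℤ := ![(1,0),(0,1),(-1,0),(0,-1)]

/-- The four exit directions of a square. -/
def dirv (E₁ E₂ : A) (i : Fin 4) : A := (dirc i).1 • E₁ + (dirc i).2 • E₂

/-- The partner vertex index of an exit edge. -/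
def pj : Fin 4 → Fin 4 := ![2,3,0,1]

theorem exit_adj {E₁ E₂ : A} (x : A) (i : Fin 4) :
    (truncSquareGraph E₁ E₂).Adj (x, i) (x + dirv E₁ E₂ i, pj i) := by
  have hd0 : dirv E₁ E₂ 0 = E₁ := by simp [dirv, dirc]
  have hd1 : dirv E₁ E₂ 1 = E₂ := by simp [dirv, dirc]
  have hd2 : dirv E₁ E₂ 2 = -E₁ := by simp [dirv, dirc]
  have hd3 : dirv E₁ E₂ 3 = -E₂ := by simp [dirv, dirc]
  rcases (by revert i; decide : i = 0 ∨ i = 1 ∨ i = 2 ∨ i = 3) with rfl | rfl | rfl | rfl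
  · rw [hd0]; exact tsg_adj_e₁ x
  · rw [hd1]; exact tsg_adj_e₂ x
  · rw [hd2, show pj 2 = 0 from rfl]
    have h := (tsg_adj_e₁ (E₁ := E₁) (E₂ := E₂) (x + -E₁)).symm
    rwa [show x + -E₁ + E₁ = x by abel] at h
  · rw [hd3, show pj 3 = 1 from rfl]
    have h := (tsg_adj_e₂ (E₁ := E₁) (E₂ := E₂) (x + -E₂)).symm
    rwa [show x + -E₂ + E₂ = x by abel] at h

theorem exit_lemma [DecidableEq A] {E₁ E₂ : A} (hs : NoSmallRel E₁ E₂)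
    (S : Finset (A × Fin 4)) (hS : S.card ≤ 2) {x : A} {i : Fin 4} (hu : (x, i) ∉ S) :
    ∃ y, y ∉ S.image Prod.fst ∧ Avoid (truncSquareGraph E₁ E₂) S (x, i) (y, 0) := by
  set D := S.image Prod.fst with hDdef
  have hD : D.card ≤ 2 := Finset.card_image_le.trans hS
  by_cases hx : x ∈ D
  case neg => exact ⟨x, hx, sq_walk S (notS_of_notD hx) i 0⟩
  case pos =>
  have b1 : ∀ j : Fin 4, (dirc j).1.natAbs ≤ 2 := by decide
  have b2 : ∀ j : Fin 4, (dirc j).2.natAbs ≤ 2 := by decide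
  have bnz : ∀ j : Fin 4, (dirc j).1 ≠ 0 ∨ (dirc j).2 ≠ 0 := by decide
  have bd1 : ∀ j k : Fin 4, ((dirc j).1 - (dirc k).1).natAbs ≤ 2 := by decide
  have bd2 : ∀ j k : Fin 4, ((dirc j).2 - (dirc k).2).natAbs ≤ 2 := by decide
  have bdne : ∀ j k : Fin 4, j ≠ k → ((dirc j).1 ≠ (dirc k).1 ∨ (dirc j).2 ≠ (dirc k).2) := by
    decide
  have dne : ∀ j k : Fin 4, j ≠ k → ∀ z : A, z + dirv E₁ E₂ j ≠ z + dirv E₁ E₂ k :=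
    fun j k hjk z => hs.add_ne z (bd1 j k) (bd2 j k) (bdne j k hjk)
  have dnz : ∀ (j : Fin 4) (z : A), z + dirv E₁ E₂ j ≠ z := by
    intro j z h
    exact hs (dirc j).1 (dirc j).2 (b1 j) (b2 j) (bnz j) (add_eq_left.mp h)
  by_cases hT : x + dirv E₁ E₂ i ∈ D
  case neg =>
    exact ⟨x + dirv E₁ E₂ i, hT, (Avoid.edge (exit_adj x i) hu (notS_of_notD hT _)).trans
      (sq_walk S (notS_of_notD hT) _ 0)⟩
  case pos =>
  obtain ⟨s₀, hs₀S, hs₀x⟩ := Finset.mem_image.mp hx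
  obtain ⟨s₁e, hs₁S, hs₁x⟩ := Finset.mem_image.mp hT
  have hxx : x ≠ x + dirv E₁ E₂ i := (dnz i x).symm
  have hs01 : s₀ ≠ s₁e := by
    intro h; rw [h, hs₁x] at hs₀x; exact hxx hs₀x.symm
  have hScard : ∀ z ∈ S, z = s₀ ∨ z = s₁e := by
    intro z hz
    by_contra hcon
    push_neg at hcon
    exact notin_of_pair (A := A × Fin 4) hS hs₀S hs₁S hs01 hcon.1 hcon.2 hz
  have hi₀ : s₀.2 ≠ i := by
    intro h
    apply hu
    have : s₀ = (x, i) := Prod.ext hs₀x h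
    exact this ▸ hs₀S
  have hfin : ∀ j : Fin 4, j - 1 ≠ j ∧ j + 1 ≠ j ∧ j - 1 + 1 = j ∧ j - 1 ≠ j + 1 := by decide
  set k : Fin 4 := if i + 1 = s₀.2 then i - 1 else i + 1 with hk
  have hki : k ≠ i := by
    rw [hk]; split_ifs
    · exact (hfin i).1
    · exact (hfin i).2.1
  have hki₀ : k ≠ s₀.2 := by
    rw [hk]; split_ifs with h
    · rw [← h]; exact (hfin i).2.2.2
    · exact h
  have hadjk : (truncSquareGraph E₁ E₂).Adj (x, i) (x, k) := by
    rw [hk]; split_ifs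
    · have h := (tsg_adj_ring (E₁ := E₁) (E₂ := E₂) x (i - 1)).symm
      rwa [(hfin i).2.2.1] at h
    · exact tsg_adj_ring x i
  have hkS : (x, k) ∉ S := by
    intro h
    rcases hScard _ h with h' | h'
    · exact hki₀ (by rw [← h'])
    · exact hxx (by rw [← hs₁x, ← h'])
  have hyD : x + dirv E₁ E₂ k ∉ D := by
    intro hyD
    obtain ⟨w, hwS, hwx⟩ := Finset.mem_image.mp hyD
    rcases hScard _ hwS with rfl | rfl
    · exact dnz k x (hwx.symm.trans hs₀x)
    · exact dne k i hki x (hwx.symm.trans hs₁x)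
  refine ⟨x + dirv E₁ E₂ k, hyD, ?_⟩
  exact (Avoid.edge hadjk hu hkS).trans ((Avoid.edge (exit_adj x k) hkS
    (notS_of_notD hyD _)).trans (sq_walk S (notS_of_notD hyD) _ 0))

theorem truncSquare_conn {E₁ E₂ : A} (hs : NoSmallRel E₁ E₂)
    (hsur : ∀ q : A, ∃ v : ℤ × ℤ, q = v.1 • E₁ + v.2 • E₂)
    (S : Finset (A × Fin 4)) (hS : S.card ≤ 2) :
    ((truncSquareGraph E₁ E₂).induce (↑S : Set (A × Fin 4))ᶜ).Connected := by
  classical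
  set D := S.image Prod.fst with hDdef
  have hD : D.card ≤ 2 := Finset.card_image_le.trans hS
  have hx₀ : ∃ x : A, x ∉ D := by
    by_contra hall
    push_neg at hall
    have h01 : (0 : A) + ((0:ℤ) • E₁ + (0:ℤ) • E₂) ≠ (0 : A) + ((1:ℤ) • E₁ + (0:ℤ) • E₂) :=
      hs.add_ne 0 (by decide) (by decide) (by decide)
    have h02 : (0 : A) + ((0:ℤ) • E₁ + (0:ℤ) • E₂) ≠ (0 : A) + ((0:ℤ) • E₁ + (1:ℤ) • E₂) :=
      hs.add_ne 0 (by decide) (by decide) (by decide)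
    have h12 : (0 : A) + ((0:ℤ) • E₁ + (1:ℤ) • E₂) ≠ (0 : A) + ((1:ℤ) • E₁ + (0:ℤ) • E₂) :=
      hs.add_ne 0 (by decide) (by decide) (by decide)
    have e0 : (0 : A) + ((0:ℤ) • E₁ + (0:ℤ) • E₂) = 0 := by simp
    have eE₁ : (0 : A) + ((1:ℤ) • E₁ + (0:ℤ) • E₂) = E₁ := by simp
    have eE₂ : (0 : A) + ((0:ℤ) • E₁ + (1:ℤ) • E₂) = E₂ := by simp
    rw [e0, eE₁] at h01
    rw [e0, eE₂] at h02
    rw [eE₂, eE₁] at h12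
    exact notin_of_pair hD (hall 0) (hall E₁) h01 h02.symm h12 (hall E₂)
  obtain ⟨x₀, hx₀⟩ := hx₀
  have main : ∀ v : A × Fin 4, v ∉ S → Avoid (truncSquareGraph E₁ E₂) S (x₀, 0) v := by
    rintro ⟨x, j⟩ hv
    obtain ⟨y, hyD, hwalk⟩ := exit_lemma hs S hS hv
    refine Avoid.trans (v := (y, 0)) ?_ hwalk.symm
    obtain ⟨w, hw⟩ := hsur (y - x₀)
    have hteq : y = x₀ + (w.1 • E₁ + w.2 • E₂) := by rw [← hw]; abel
    exact CA_to_Avoid (cayley_reach hs hD (wgt w) w x₀ y le_rfl hx₀ hyD hteq) hx₀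
  apply SimpleGraph.induce_connected_of_patches ((x₀, 0) : A × Fin 4)
    (by simpa using notS_of_notD hx₀ 0)
  intro v hv
  have hvS : v ∉ S := by simpa using hv
  obtain ⟨p, hp⟩ := main v hvS
  exact ⟨{w | w ∈ p.support}, fun w hw => by simpa using hp w hw,
    p.start_mem_support, p.end_mem_support,
    (p.connected_induce_support).preconnected _ _⟩

end GraphLayer

/-- Every truncated-square torus graph (type `{4,8,8}`) is 3-connected. -/
theorem truncSquareTorusGraph_3connected (L : AddSubgroup (ℤ × ℤ)) (hL : Admissible L) :
    (truncSquareTorusGraph L).KConnected 3 := by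
  obtain ⟨hfin, hadm⟩ := hL
  haveI : Finite ((ℤ × ℤ) ⧸ L) := hfin
  have hmk : ∀ v : ℤ × ℤ, v.1 • (QuotientAddGroup.mk e₁ : (ℤ × ℤ) ⧸ L) +
      v.2 • (QuotientAddGroup.mk e₂ : (ℤ × ℤ) ⧸ L) = QuotientAddGroup.mk v := by
    intro v
    rw [← QuotientAddGroup.mk_zsmul, ← QuotientAddGroup.mk_zsmul, ← QuotientAddGroup.mk_add]
    congr 1
    simp [e₁, e₂, Prod.ext_iff]
  have hs : NoSmallRel (QuotientAddGroup.mk e₁ : (ℤ × ℤ) ⧸ L) (QuotientAddGroup.mk e₂) := by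
    intro a b ha hb hab h
    rw [hmk (a, b)] at h
    rw [QuotientAddGroup.eq_zero_iff] at h
    apply hadm _ h
    · simp only [Prod.ext_iff, Prod.fst_zero, Prod.snd_zero, ne_eq, not_and_or]
      omega
    · simp only [Int.abs_eq_natAbs]
      constructor <;> [exact_mod_cast ha; exact_mod_cast hb]
  have hsur : ∀ q : (ℤ × ℤ) ⧸ L, ∃ v : ℤ × ℤ,
      q = v.1 • (QuotientAddGroup.mk e₁ : (ℤ × ℤ) ⧸ L) + v.2 • QuotientAddGroup.mk e₂ := by
    intro q
    obtain ⟨v, rfl⟩ := QuotientAddGroup.mk_surjective q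
    exact ⟨v, (hmk v).symm⟩
  constructor
  · rw [Nat.card_prod]
    have h1 : 0 < Nat.card ((ℤ × ℤ) ⧸ L) := Nat.card_pos
    have h2 : Nat.card (Fin 4) = 4 := by simp
    rw [h2]
    omega
  · intro S hS
    exact truncSquare_conn hs hsur S (by omega)
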